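/- Let S ⊆ T be two markings on a category C, let F : C ⥤ Type u be an S-cosheaf, let C be an object of C and let g : D ⟶ C be a morphism belonging to T. Suppose e : E₀ ⟶ E is a morphism of S over C (i.e. equipped with compatible morphisms E₀ ⟶ C and E ⟶ C) such that for every n ≥ 0 the (n+1)-fold fibre power E_n = E₀ ×_E ⋯ ×_E E₀ satisfies: the canonical map F(E_n ×_C D) ⟶ F(E_n) ×_{F(C)} F(D) is a bijection. Then the canonical map F(E ×_C D) ⟶ F(E) ×_{F(C)} F(D) is a bijection. In other words, the full subcategory of the slice category C_{/C} spanned by those E ⟶ C for which F commutes with the pullback against g is downward closed. -/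

import Mathlib

open CategoryTheory Limits

universe w v u

variable {C : Type u} [Category.{v} C]

/-- A *marking* on a category `C`: a class of morphisms containing all isomorphisms,
stable under composition, such that pullbacks along its members exist and it is
stable under such pullbacks. -/
structure Marking (S : MorphismProperty C) : Prop where
  of_isIso : ∀ {X Y : C} (f : X ⟶ Y), IsIso f → S f
  comp_mem : ∀ {X Y Z : C} {f : X ⟶ Y} {g : Y ⟶ Z}, S f → S g → S (f ≫ g)
  hasPullback : ∀ {X Y Z : C} (s : X ⟶ Z) (g : Y ⟶ Z), S s → HasPullback s g
  snd_mem : ∀ {X Y Z : C} (s : X ⟶ Z) (g : Y ⟶ Z) (hs : S s),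
    letI := hasPullback s g hs
    S (pullback.snd s g)

/-- The iterated fibre powers of a morphism `s : C₀ ⟶ X` of a marking,
together with their projections to `X`, which again belong to the marking:
`fibrePowerAux n` is the `(n+1)`-fold fibre power `C₀ ×_X ⋯ ×_X C₀`. -/
noncomputable def Marking.fibrePowerAux {S : MorphismProperty C} (hS : Marking S)
    {C₀ X : C} (s : C₀ ⟶ X) (hs : S s) : (n : ℕ) → Σ' (Z : C) (p : Z ⟶ X), S p
  | 0 => ⟨C₀, s, hs⟩
  | n + 1 =>
    let prev := hS.fibrePowerAux s hs n
    letI := hS.hasPullback prev.2.1 s prev.2.2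
    ⟨pullback prev.2.1 s, pullback.snd prev.2.1 s ≫ s,
      hS.comp_mem (hS.snd_mem prev.2.1 s prev.2.2) hs⟩

/-- The `(n+1)`-fold fibre power `C₀ ×_X ⋯ ×_X C₀` of a morphism `s : C₀ ⟶ X`
belonging to a marking. -/
noncomputable def Marking.fibrePower {S : MorphismProperty C} (hS : Marking S)
    {C₀ X : C} (s : C₀ ⟶ X) (hs : S s) (n : ℕ) : C :=
  (hS.fibrePowerAux s hs n).1

/-- The projection from the `(n+1)`-fold fibre power of `s : C₀ ⟶ X` to the base `X`. -/
noncomputable def Marking.fibrePowerHom {S : MorphismProperty C} (hS : Marking S)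
    {C₀ X : C} (s : C₀ ⟶ X) (hs : S s) (n : ℕ) : hS.fibrePower s hs n ⟶ X :=
  (hS.fibrePowerAux s hs n).2.1

/-- A full subcategory (given by a predicate `P` on objects) is *downward closed*
with respect to a marking `S` if whenever `s : C₀ ⟶ X` belongs to `S` and all the
iterated fibre powers `C₀ ×_X ⋯ ×_X C₀` satisfy `P`, then so does `X`. -/
def DownwardClosed {S : MorphismProperty C} (hS : Marking S) (P : C → Prop) : Prop :=
  ∀ {C₀ X : C} (s : C₀ ⟶ X) (hs : S s), (∀ n : ℕ, P (hS.fibrePower s hs n)) → P X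

/-- A full subcategory (given by a predicate `P` on objects) is *generating* with
respect to a marking `S` if it is closed under pullbacks along morphisms of `S` and
the only downward closed full subcategory containing it is the whole category. -/
structure IsGenerating {S : MorphismProperty C} (hS : Marking S) (P : C → Prop) : Prop where
  pullback_mem : ∀ {A B X : C} (s : A ⟶ X) (g : B ⟶ X) (hs : S s),
    P A → P B → P X →
    letI := hS.hasPullback s g hs
    P (pullback s g)
  generates : ∀ Q : C → Prop, DownwardClosed hS Q → (∀ X, P X → Q X) → ∀ X, Q X

/-- The canonical comparison map `F(D ×_X E) ⟶ F(D) ×_{F(X)} F(E)` for a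
`Type`-valued functor `F`. -/
noncomputable def comparisonMap (F : C ⥤ Type w) {D E X : C} (t : D ⟶ X) (g : E ⟶ X)
    [hpb : HasPullback t g] (z : F.obj (pullback t g)) :
    { p : F.obj D × F.obj E // F.map t p.1 = F.map g p.2 } :=
  ⟨(F.map (pullback.fst t g) z, F.map (pullback.snd t g) z), by
    rw [← FunctorToTypes.map_comp_apply, ← FunctorToTypes.map_comp_apply,
      pullback.condition]⟩

/-- A functor `F : C ⥤ Type` is an `S`-cosheaf if for every `s : C₀ ⟶ X` in `S`
the diagram `F(C₀ ×_X C₀) ⇉ F(C₀) ⟶ F(X)` is a coequalizer. -/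
def IsCosheaf {S : MorphismProperty C} (hS : Marking S) (F : C ⥤ Type w) : Prop :=
  ∀ {C₀ X : C} (s : C₀ ⟶ X) (hs : S s),
    letI := hS.hasPullback s s hs
    Nonempty (IsColimit (Cofork.ofπ
      (f := F.map (pullback.fst s s)) (g := F.map (pullback.snd s s)) (F.map s)
      (by rw [← F.map_comp, ← F.map_comp, pullback.condition])))

/-- A functor `F : C ⥤ Type` is `T`-adapted if it commutes with pullbacks along
morphisms of `T`. -/
def IsAdapted {T : MorphismProperty C} (hT : Marking T) (F : C ⥤ Type w) : Prop :=
  ∀ {D E X : C} (t : D ⟶ X) (ht : T t) (g : E ⟶ X),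
    Function.Bijective (comparisonMap F t g (hpb := hT.hasPullback t g ht))

/-- The naturality square of `α : F ⟶ G` at `t : D ⟶ X` is a pullback square of types. -/
def SquareCartesian {F G : C ⥤ Type w} (α : F ⟶ G) {D X : C} (t : D ⟶ X) : Prop :=
  Function.Bijective (fun z : F.obj D =>
    (⟨(F.map t z, α.app D z), (NatTrans.naturality_apply α t z)⟩ :
      { p : F.obj X × G.obj D // α.app X p.1 = G.map t p.2 }))

/-- A natural transformation `α : F ⟶ G` is `T`-cartesian if all its naturality
squares at morphisms of `T` are pullback squares. -/
def IsCartesianNatTrans (T : MorphismProperty C) {F G : C ⥤ Type w} (α : F ⟶ G) : Prop :=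
  ∀ {D X : C} (t : D ⟶ X), T t → SquareCartesian α t


private lemma cofork_colimit_facts {A B Q : Type w} (f g : A ⟶ B) (π : B ⟶ Q)
    (wπ : f ≫ π = g ≫ π) (hc : IsColimit (Cofork.ofπ π wπ)) :
    Function.Surjective π ∧
      ∀ x y, π x = π y →
        Relation.EqvGen (fun u v => ∃ a, f a = u ∧ g a = v) x y := by
  constructor
  · have : Epi π := ⟨fun u v huv => Cofork.IsColimit.hom_ext hc huv⟩
    exact (epi_iff_surjective π).mp this
  · intro x y hxy
    have hcomm := IsColimit.comp_coconePointUniqueUpToIso_hom hc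
      (Types.coequalizerColimit f g).isColimit WalkingParallelPair.one
    have hx : (hc.coconePointUniqueUpToIso (Types.coequalizerColimit f g).isColimit).hom (π x)
        = Quot.mk (Function.Coequalizer.Rel ⇑f ⇑g) x := ConcreteCategory.congr_hom hcomm x
    have hy : (hc.coconePointUniqueUpToIso (Types.coequalizerColimit f g).isColimit).hom (π y)
        = Quot.mk (Function.Coequalizer.Rel ⇑f ⇑g) y := ConcreteCategory.congr_hom hcomm y
    have h3 := congrArg (hc.coconePointUniqueUpToIso (Types.coequalizerColimit f g).isColimit).hom hxy
    rw [hx, hy] at h3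
    exact Relation.EqvGen.mono (fun u v (h : Function.Coequalizer.Rel ⇑f ⇑g u v) => by rcases h with ⟨a⟩; exact ⟨a, rfl, rfl⟩)
      _ _ (Quot.eq.mp h3)

private lemma aux_downward (F : C ⥤ Type w)
    {X D E₀ E E₁ : C} (g : D ⟶ X) (e : E₀ ⟶ E) (pE : E ⟶ X)
    (p₁ p₂ : E₁ ⟶ E₀) (hcond : p₁ ≫ e = p₂ ≫ e)
    [HasPullback g pE] [HasPullback g (e ≫ pE)] [HasPullback g ((p₂ ≫ e) ≫ pE)]
    [HasPullback e (pullback.snd g pE)]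
    (hesurj : Function.Surjective (F.map e))
    (herel : ∀ x y : F.obj E₀, F.map e x = F.map e y →
      Relation.EqvGen (fun u v => ∃ w : F.obj E₁, F.map p₁ w = u ∧ F.map p₂ w = v) x y)
    (hesurj' : Function.Surjective (F.map (pullback.snd e (pullback.snd g pE))))
    (h0 : Function.Bijective (comparisonMap F g (e ≫ pE)))
    (h1surj : Function.Surjective (comparisonMap F g ((p₂ ≫ e) ≫ pE))) :
    Function.Bijective (comparisonMap F g pE) := by
  obtain ⟨q, hq1, hq2⟩ : ∃ q : pullback g (e ≫ pE) ⟶ pullback g pE,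
      q ≫ pullback.fst g pE = pullback.fst g (e ≫ pE) ∧
      q ≫ pullback.snd g pE = pullback.snd g (e ≫ pE) ≫ e :=
    ⟨pullback.lift (pullback.fst g (e ≫ pE)) (pullback.snd g (e ≫ pE) ≫ e)
      (by rw [pullback.condition, Category.assoc]),
      pullback.lift_fst _ _ _, pullback.lift_snd _ _ _⟩
  set c₀ : F.obj (pullback g (e ≫ pE)) ≃ _ := Equiv.ofBijective _ h0 with hc₀
  constructor
  · -- injectivity
    intro z z' hzz
    have hfst : F.map (pullback.fst g pE) z = F.map (pullback.fst g pE) z' :=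
      congrArg (fun t => t.1.1) hzz
    have hsnd : F.map (pullback.snd g pE) z = F.map (pullback.snd g pE) z' :=
      congrArg (fun t => t.1.2) hzz
    obtain ⟨a, ha⟩ := hesurj' z
    obtain ⟨a', ha'⟩ := hesurj' z'
    obtain ⟨r, hr1, hr2⟩ : ∃ r : pullback e (pullback.snd g pE) ⟶ pullback g (e ≫ pE),
        r ≫ pullback.fst g (e ≫ pE)
          = pullback.snd e (pullback.snd g pE) ≫ pullback.fst g pE ∧
        r ≫ pullback.snd g (e ≫ pE) = pullback.fst e (pullback.snd g pE) :=
      ⟨pullback.lift _ _ (by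
        rw [Category.assoc, pullback.condition (f := g) (g := pE), ← Category.assoc,
          ← pullback.condition (f := e) (g := pullback.snd g pE), Category.assoc]),
        pullback.lift_fst _ _ _, pullback.lift_snd _ _ _⟩
    have hflat : ∀ p : E₁ ⟶ E₀, p ≫ e = p₂ ≫ e →
        (pullback.snd g ((p₂ ≫ e) ≫ pE) ≫ p) ≫ e ≫ pE
          = pullback.snd g ((p₂ ≫ e) ≫ pE) ≫ (p₂ ≫ e) ≫ pE := by
      intro p hp
      generalize pullback.snd g ((p₂ ≫ e) ≫ pE) = k
      rw [Category.assoc k p (e ≫ pE), ← Category.assoc p e pE, hp]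
    obtain ⟨m₁, hm11, hm12⟩ : ∃ m : pullback g ((p₂ ≫ e) ≫ pE) ⟶ pullback g (e ≫ pE),
        m ≫ pullback.fst g (e ≫ pE) = pullback.fst g ((p₂ ≫ e) ≫ pE) ∧
        m ≫ pullback.snd g (e ≫ pE) = pullback.snd g ((p₂ ≫ e) ≫ pE) ≫ p₁ :=
      ⟨pullback.lift _ _ (pullback.condition.trans (hflat p₁ hcond).symm),
        pullback.lift_fst _ _ _, pullback.lift_snd _ _ _⟩
    obtain ⟨m₂, hm21, hm22⟩ : ∃ m : pullback g ((p₂ ≫ e) ≫ pE) ⟶ pullback g (e ≫ pE),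
        m ≫ pullback.fst g (e ≫ pE) = pullback.fst g ((p₂ ≫ e) ≫ pE) ∧
        m ≫ pullback.snd g (e ≫ pE) = pullback.snd g ((p₂ ≫ e) ≫ pE) ≫ p₂ :=
      ⟨pullback.lift _ _ (pullback.condition.trans (hflat p₂ rfl).symm),
        pullback.lift_fst _ _ _, pullback.lift_snd _ _ _⟩
    have F1 : r ≫ q = pullback.snd e (pullback.snd g pE) := by
      apply pullback.hom_ext
      · rw [Category.assoc, hq1, hr1]
      · rw [Category.assoc, hq2, ← Category.assoc, hr2,
          ← pullback.condition (f := e) (g := pullback.snd g pE)]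
    have F2 : m₁ ≫ q = m₂ ≫ q := by
      apply pullback.hom_ext
      · rw [Category.assoc m₁ q (pullback.fst g pE), Category.assoc m₂ q (pullback.fst g pE),
          hq1, hm11, hm21]
      · rw [Category.assoc m₁ q (pullback.snd g pE), Category.assoc m₂ q (pullback.snd g pE),
          hq2, ← Category.assoc m₁ (pullback.snd g (e ≫ pE)) e,
          ← Category.assoc m₂ (pullback.snd g (e ≫ pE)) e, hm12, hm22,
          Category.assoc (pullback.snd g ((p₂ ≫ e) ≫ pE)) p₁ e,
          Category.assoc (pullback.snd g ((p₂ ≫ e) ≫ pE)) p₂ e, hcond]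
    have t1 : ∀ zz : F.obj (pullback g pE),
        F.map g (F.map (pullback.fst g pE) zz) = F.map pE (F.map (pullback.snd g pE) zz) := by
      intro zz
      rw [← FunctorToTypes.map_comp_apply, ← FunctorToTypes.map_comp_apply, pullback.condition]
    have t2 : ∀ (b : F.obj (pullback e (pullback.snd g pE))) (zz : F.obj (pullback g pE)),
        F.map (pullback.snd e (pullback.snd g pE)) b = zz →
        F.map e (F.map (pullback.fst e (pullback.snd g pE)) b)
          = F.map (pullback.snd g pE) zz := by
      intro b zz hb
      rw [← FunctorToTypes.map_comp_apply, pullback.condition,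
        FunctorToTypes.map_comp_apply, hb]
    have hcmp : ∀ (b : F.obj (pullback e (pullback.snd g pE))) (zz : F.obj (pullback g pE)),
        F.map (pullback.snd e (pullback.snd g pE)) b = zz →
        F.map g (F.map (pullback.fst g pE) zz)
          = F.map (e ≫ pE) (F.map (pullback.fst e (pullback.snd g pE)) b) := by
      intro b zz hb
      rw [FunctorToTypes.map_comp_apply, t2 b zz hb]
      exact t1 zz
    -- the map θ evaluated: for any b over zz
    have hAA : ∀ (b : F.obj (pullback e (pullback.snd g pE))) (zz : F.obj (pullback g pE))
        (hb : F.map (pullback.snd e (pullback.snd g pE)) b = zz)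
        (hxx : F.map g (F.map (pullback.fst g pE) zz)
          = F.map (e ≫ pE) (F.map (pullback.fst e (pullback.snd g pE)) b)),
        F.map q (c₀.symm ⟨(F.map (pullback.fst g pE) zz,
          F.map (pullback.fst e (pullback.snd g pE)) b), hxx⟩) = zz := by
      intro b zz hb hxx
      have eA : c₀ (F.map r b) = ⟨(F.map (pullback.fst g pE) zz,
          F.map (pullback.fst e (pullback.snd g pE)) b), hxx⟩ := by
        apply Subtype.ext
        apply Prod.ext
        · show F.map (pullback.fst g (e ≫ pE)) (F.map r b) = _
          rw [← FunctorToTypes.map_comp_apply, hr1, FunctorToTypes.map_comp_apply, hb]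
        · show F.map (pullback.snd g (e ≫ pE)) (F.map r b) = _
          rw [← FunctorToTypes.map_comp_apply, hr2]
      rw [← eA, Equiv.symm_apply_apply, ← FunctorToTypes.map_comp_apply, F1]
      exact hb
    -- the key invariance
    have key : ∀ (d : F.obj D) (x y : F.obj E₀),
        Relation.EqvGen (fun u v => ∃ w : F.obj E₁, F.map p₁ w = u ∧ F.map p₂ w = v) x y →
        ∀ (hx : F.map g d = F.map (e ≫ pE) x) (hy : F.map g d = F.map (e ≫ pE) y),
        F.map q (c₀.symm ⟨(d, x), hx⟩) = F.map q (c₀.symm ⟨(d, y), hy⟩) := by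
      intro d x y hxy
      have Einv : ∀ x y : F.obj E₀,
          Relation.EqvGen (fun u v => ∃ w : F.obj E₁, F.map p₁ w = u ∧ F.map p₂ w = v) x y →
          F.map e x = F.map e y := by
        intro x y h
        induction h with
        | rel u v huv =>
          obtain ⟨w, h1, h2⟩ := huv
          rw [← h1, ← h2, ← FunctorToTypes.map_comp_apply, ← FunctorToTypes.map_comp_apply,
            hcond]
        | refl _ => rfl
        | symm _ _ _ ih => exact ih.symm
        | trans _ _ _ _ _ ih1 ih2 => exact ih1.trans ih2
      induction hxy with
      | rel u v huv =>
        intro hx hy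
        obtain ⟨w, hw1, hw2⟩ := huv
        have hkw : F.map g d = F.map ((p₂ ≫ e) ≫ pE) w := by
          have hh : F.map ((p₂ ≫ e) ≫ pE) w = F.map (e ≫ pE) (F.map p₂ w) := by
            rw [← FunctorToTypes.map_comp_apply, Category.assoc]
          rw [hh, hw2]; exact hy
        obtain ⟨u₁, hu₁⟩ := h1surj ⟨(d, w), hkw⟩
        have hu1 : F.map (pullback.fst g ((p₂ ≫ e) ≫ pE)) u₁ = d :=
          congrArg (fun t => t.1.1) hu₁
        have hu2 : F.map (pullback.snd g ((p₂ ≫ e) ≫ pE)) u₁ = w :=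
          congrArg (fun t => t.1.2) hu₁
        have e1 : c₀ (F.map m₁ u₁) = ⟨(d, u), hx⟩ := by
          apply Subtype.ext
          apply Prod.ext
          · show F.map (pullback.fst g (e ≫ pE)) (F.map m₁ u₁) = d
            rw [← FunctorToTypes.map_comp_apply, hm11, hu1]
          · show F.map (pullback.snd g (e ≫ pE)) (F.map m₁ u₁) = u
            rw [← FunctorToTypes.map_comp_apply, hm12, FunctorToTypes.map_comp_apply, hu2, hw1]
        have e2 : c₀ (F.map m₂ u₁) = ⟨(d, v), hy⟩ := by
          apply Subtype.ext
          apply Prod.ext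
          · show F.map (pullback.fst g (e ≫ pE)) (F.map m₂ u₁) = d
            rw [← FunctorToTypes.map_comp_apply, hm21, hu1]
          · show F.map (pullback.snd g (e ≫ pE)) (F.map m₂ u₁) = v
            rw [← FunctorToTypes.map_comp_apply, hm22, FunctorToTypes.map_comp_apply, hu2, hw2]
        rw [← e1, ← e2, Equiv.symm_apply_apply, Equiv.symm_apply_apply,
          ← FunctorToTypes.map_comp_apply, ← FunctorToTypes.map_comp_apply, F2]
      | refl _ => intro hx hy; rfl
      | symm x y h ih => intro hx hy; exact (ih hy hx).symm
      | trans x y zq hxy hyz ih1 ih2 =>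
        intro hx hz
        have hy : F.map g d = F.map (e ≫ pE) y := by
          rw [hx, FunctorToTypes.map_comp_apply, FunctorToTypes.map_comp_apply, Einv x y hxy]
        exact (ih1 hx hy).trans (ih2 hy hz)
    have hee : F.map e (F.map (pullback.fst e (pullback.snd g pE)) a)
        = F.map e (F.map (pullback.fst e (pullback.snd g pE)) a') := by
      rw [t2 a z ha, t2 a' z' ha']; exact hsnd
    have hx₀ := hcmp a z ha
    have hx₀'' := hcmp a' z' ha'
    have hx₀' : F.map g (F.map (pullback.fst g pE) z)
        = F.map (e ≫ pE) (F.map (pullback.fst e (pullback.snd g pE)) a') := by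
      rw [hfst]; exact hx₀''
    calc z = F.map q (c₀.symm ⟨(F.map (pullback.fst g pE) z,
          F.map (pullback.fst e (pullback.snd g pE)) a), hx₀⟩) := (hAA a z ha hx₀).symm
      _ = F.map q (c₀.symm ⟨(F.map (pullback.fst g pE) z,
          F.map (pullback.fst e (pullback.snd g pE)) a'), hx₀'⟩) :=
        key _ _ _ (herel _ _ hee) hx₀ hx₀'
      _ = F.map q (c₀.symm ⟨(F.map (pullback.fst g pE) z',
          F.map (pullback.fst e (pullback.snd g pE)) a'), hx₀''⟩) :=
        congrArg (fun k => F.map q (c₀.symm k)) (Subtype.ext (Prod.ext hfst rfl))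
      _ = z' := hAA a' z' ha' hx₀''
  · -- surjectivity
    rintro ⟨⟨d, x⟩, hk⟩
    obtain ⟨x₀, hx₀⟩ := hesurj x
    obtain ⟨z₀, hz₀⟩ := h0.2 ⟨(d, x₀), by
      rw [FunctorToTypes.map_comp_apply, hx₀]; exact hk⟩
    have h1z : F.map (pullback.fst g (e ≫ pE)) z₀ = d := congrArg (fun t => t.1.1) hz₀
    have h2z : F.map (pullback.snd g (e ≫ pE)) z₀ = x₀ := congrArg (fun t => t.1.2) hz₀
    refine ⟨F.map q z₀, Subtype.ext (Prod.ext ?_ ?_)⟩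
    · show F.map (pullback.fst g pE) (F.map q z₀) = d
      rw [← FunctorToTypes.map_comp_apply, hq1, h1z]
    · show F.map (pullback.snd g pE) (F.map q z₀) = x
      rw [← FunctorToTypes.map_comp_apply, hq2, FunctorToTypes.map_comp_apply, h2z, hx₀]

/-- Let `S ⊆ T` be markings, `F` an `S`-cosheaf, `g : D ⟶ X` a
morphism of `T` and `e : E₀ ⟶ E` a morphism of `S` over `X` (via `pE : E ⟶ X`).
If for every `n` the comparison map `F(Eₙ ×_X D) ⟶ F(Eₙ) ×_{F(X)} F(D)` at the
`(n+1)`-fold fibre power `Eₙ = E₀ ×_E ⋯ ×_E E₀` is bijective, then so is the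
comparison map `F(E ×_X D) ⟶ F(E) ×_{F(X)} F(D)`: the full subcategory of
`C_{/X}` of objects for which `F` commutes with the pullback against `g` is
downward closed. -/
theorem comparison_bijective_of_fibrePowers
    {C : Type u} [Category.{v} C] {S T : MorphismProperty C}
    (hS : Marking S) (hT : Marking T) (hST : ∀ {X Y : C} (f : X ⟶ Y), S f → T f)
    (F : C ⥤ Type w) (hF : IsCosheaf hS F)
    {X D : C} (g : D ⟶ X) (hg : T g)
    {E₀ E : C} (e : E₀ ⟶ E) (he : S e) (pE : E ⟶ X)
    (h : ∀ n : ℕ,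
      Function.Bijective (comparisonMap F g (hS.fibrePowerHom e he n ≫ pE)
        (hpb := hT.hasPullback g (hS.fibrePowerHom e he n ≫ pE) hg))) :
    Function.Bijective (comparisonMap F g pE (hpb := hT.hasPullback g pE hg)) := by
  haveI : HasPullback g pE := hT.hasPullback g pE hg
  haveI : HasPullback e e := hS.hasPullback e e he
  haveI : HasPullback g (e ≫ pE) := hT.hasPullback g (hS.fibrePowerHom e he 0 ≫ pE) hg
  haveI : HasPullback g ((pullback.snd e e ≫ e) ≫ pE) :=
    hT.hasPullback g (hS.fibrePowerHom e he 1 ≫ pE) hg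
  haveI : HasPullback e (pullback.snd g pE) := hS.hasPullback e (pullback.snd g pE) he
  obtain ⟨hc⟩ := hF e he
  obtain ⟨hc₂⟩ := hF (pullback.snd e (pullback.snd g pE))
    (hS.snd_mem e (pullback.snd g pE) he)
  have facts := cofork_colimit_facts _ _ _ _ hc
  have facts2 := cofork_colimit_facts _ _ _ _ hc₂
  exact aux_downward F g e pE (pullback.fst e e) (pullback.snd e e) pullback.condition
    facts.1 facts.2 facts2.1 (h 0) (h 1).2
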